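/- Fix β ∈ (1,2) and a threshold sequence u = (u_n)_{n≥1} with each u_n ∈ [1,(β−1)⁻¹]. For any sequence (n_m)_{m≥1} of positive real numbers with n_m → ∞ as m → ∞, and for every ε > 0, the Lebesgue measure of the set {x ∈ [0,1] : |k(m,u,x) − m·log 2/log β| > ε·n_m} tends to 0 as m → ∞ (with the convention that the inequality holds whenever k(m,u,x) = ∞). That is, (1/n_m)(k(m,u,x) − m·log 2/log β) converges to 0 in probability with respect to Lebesgue measure. -/

import Mathlib

open MeasureTheory Filter Set Real

/-- Orbit of the β-encoder: `betaIter β u x n` is the iterate `x_n`, where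
`x_0 = x` and `x_n = T_{u_n}(x_{n-1})`. -/
noncomputable def betaIter (β : ℝ) (u : ℕ → ℝ) (x : ℝ) : ℕ → ℝ
  | 0 => x
  | n + 1 =>
      if β * betaIter β u x n < u (n + 1) then β * betaIter β u x n
      else β * betaIter β u x n - 1

/-- The bit `b_n` produced by the β-encoder at step `n ≥ 1`. -/
noncomputable def betaBit (β : ℝ) (u : ℕ → ℝ) (x : ℝ) (n : ℕ) : ℝ :=
  if β * betaIter β u x (n - 1) < u n then 0 else 1

/-- The interval `I_k(u,x)` determined by the first `k` output bits. -/
noncomputable def betaI (β : ℝ) (u : ℕ → ℝ) (x : ℝ) (k : ℕ) : Set ℝ :=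
  Set.Icc (∑ n ∈ Finset.Icc 1 k, betaBit β u x n / β ^ n)
    ((∑ n ∈ Finset.Icc 1 k, betaBit β u x n / β ^ n) + (β ^ k)⁻¹ * (β - 1)⁻¹)

/-- The dyadic interval of order `m` containing `x`: `[j/2^m, (j+1)/2^m)`,
the last one (containing 1) being `[1 - 2^{-m}, 1]`. -/
noncomputable def dyadic (m : ℕ) (x : ℝ) : Set ℝ :=
  if 1 - ((2:ℝ) ^ m)⁻¹ ≤ x then Set.Icc (1 - ((2:ℝ) ^ m)⁻¹) 1
  else Set.Ico ((⌊x * 2 ^ m⌋ : ℝ) / 2 ^ m) (((⌊x * 2 ^ m⌋ : ℝ) + 1) / 2 ^ m)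

/-- `k(m, u, x) = inf { k ≥ 1 : I_k(u,x) ⊆ D_m(x) } ∈ ℕ ∪ {∞}`. -/
noncomputable def kval (β : ℝ) (u : ℕ → ℝ) (x : ℝ) (m : ℕ) : ℕ∞ :=
  sInf {e : ℕ∞ | ∃ k : ℕ, e = (k : ℕ∞) ∧ 1 ≤ k ∧ betaI β u x k ⊆ dyadic m x}

lemma betaIter_mem {β : ℝ} (hβ1 : 1 < β) (hβ2 : β < 2) {u : ℕ → ℝ}
    (hu : ∀ n, 1 ≤ n → u n ∈ Set.Icc (1:ℝ) (β - 1)⁻¹) {x : ℝ}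
    (hx : x ∈ Set.Icc (0:ℝ) (β-1)⁻¹) : ∀ k, betaIter β u x k ∈ Set.Icc (0:ℝ) (β-1)⁻¹ := by
  intro k
  induction k with
  | zero => exact hx
  | succ k ih =>
    have hb1 : (0:ℝ) < β - 1 := by linarith
    obtain ⟨h0, h1⟩ := ih
    obtain ⟨hu1, hu2⟩ := hu (k+1) (by omega)
    have hid : β * (β-1)⁻¹ - 1 = (β-1)⁻¹ := by field_simp; ring
    simp only [betaIter]
    split_ifs with h
    · exact ⟨by nlinarith, by linarith⟩
    · refine ⟨by linarith, ?_⟩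
      have : β * betaIter β u x k ≤ β * (β-1)⁻¹ :=
        mul_le_mul_of_nonneg_left h1 (by linarith)
      linarith

lemma betaSum_eq {β : ℝ} (hβ : 0 < β) (u : ℕ → ℝ) (x : ℝ) :
    ∀ k, (∑ n ∈ Finset.Icc 1 k, betaBit β u x n / β ^ n) + betaIter β u x k / β ^ k = x := by
  intro k
  induction k with
  | zero => simp [betaIter]
  | succ k ih =>
    rw [Finset.sum_Icc_succ_top (by omega : 1 ≤ k + 1)]
    have hβk : (β:ℝ) ^ k ≠ 0 := pow_ne_zero _ hβ.ne'
    have hβ' : (β:ℝ) ≠ 0 := hβ.ne'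
    have hstep : betaIter β u x (k+1) = β * betaIter β u x k - betaBit β u x (k+1) := by
      simp only [betaIter, betaBit, Nat.add_sub_cancel]
      split_ifs <;> ring
    have key : betaBit β u x (k+1) / β ^ (k+1)
        + (β * betaIter β u x k - betaBit β u x (k+1)) / β ^ (k+1)
        = betaIter β u x k / β ^ k := by
      field_simp
      ring
    rw [hstep]
    linarith [ih, key]

lemma betaI_subset {β : ℝ} (hβ1 : 1 < β) (hβ2 : β < 2) {u : ℕ → ℝ}
    (hu : ∀ n, 1 ≤ n → u n ∈ Set.Icc (1:ℝ) (β - 1)⁻¹) {x : ℝ}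
    (hx : x ∈ Set.Icc (0:ℝ) (β-1)⁻¹) (k : ℕ) :
    betaI β u x k ⊆ Set.Icc (x - (β ^ k)⁻¹ * (β - 1)⁻¹) (x + (β ^ k)⁻¹ * (β - 1)⁻¹) := by
  have hb0 : (0:ℝ) < β := lt_trans one_pos hβ1
  have hpk : (0:ℝ) < β ^ k := pow_pos hb0 k
  have hsum := betaSum_eq hb0 u x k
  obtain ⟨hit0, hit1⟩ := betaIter_mem hβ1 hβ2 hu hx k
  have h1 : (0:ℝ) ≤ betaIter β u x k / β ^ k := div_nonneg hit0 hpk.le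
  have h2 : betaIter β u x k / β ^ k ≤ (β ^ k)⁻¹ * (β - 1)⁻¹ := by
    rw [div_eq_inv_mul]
    exact mul_le_mul_of_nonneg_left hit1 (inv_nonneg.2 hpk.le)
  exact Set.Icc_subset_Icc (by linarith) (by linarith)

lemma subset_dyadic {β : ℝ} (hβ1 : 1 < β) (hβ2 : β < 2) {u : ℕ → ℝ}
    (hu : ∀ n, 1 ≤ n → u n ∈ Set.Icc (1:ℝ) (β - 1)⁻¹) {x : ℝ}
    (hx : x ∈ Set.Icc (0:ℝ) 1) (m K : ℕ)
    (hfar : ∀ j : ℕ, j ≤ 2^m → (β ^ K)⁻¹ * (β - 1)⁻¹ < |x - (j:ℝ)/2^m|) :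
    betaI β u x K ⊆ dyadic m x := by
  have hb0 : (0:ℝ) < β := lt_trans one_pos hβ1
  have hb1 : (0:ℝ) < β - 1 := by linarith
  have hbi : (1:ℝ) ≤ (β-1)⁻¹ := by
    rw [le_inv_comm₀ one_pos hb1]; linarith
  set L : ℝ := (β ^ K)⁻¹ * (β - 1)⁻¹ with hLdef
  have hx' : x ∈ Set.Icc (0:ℝ) (β-1)⁻¹ := ⟨hx.1, hx.2.trans hbi⟩
  refine (betaI_subset hβ1 hβ2 hu hx' K).trans ?_
  have h2m : (0:ℝ) < 2 ^ m := by positivity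
  have h2m1 : (1:ℝ) ≤ 2 ^ m := one_le_pow₀ one_le_two
  unfold dyadic
  split_ifs with h
  · have h1 := hfar (2^m - 1) (Nat.sub_le _ _)
    have h2 := hfar (2^m) le_rfl
    have e1 : ((2^m - 1 : ℕ):ℝ)/2^m = 1 - ((2:ℝ)^m)⁻¹ := by
      have : ((2^m - 1 : ℕ):ℝ) = 2^m - 1 := by
        push_cast [Nat.one_le_two_pow]
        ring
      rw [this]; field_simp
    have e2 : ((2^m : ℕ):ℝ)/2^m = 1 := by
      push_cast; field_simp
    rw [e1] at h1; rw [e2] at h2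
    rw [abs_of_nonneg (by linarith)] at h1
    rw [abs_of_nonpos (by linarith [hx.2])] at h2
    exact Set.Icc_subset_Icc (by linarith) (by linarith)
  · push_neg at h
    set j0 := ⌊x * 2^m⌋ with hj0
    have hfl : (j0:ℝ) ≤ x * 2^m := Int.floor_le _
    have hfl2 : x * 2^m < (j0:ℝ) + 1 := Int.lt_floor_add_one _
    have hj0nn : 0 ≤ j0 := Int.le_floor.2 (by push_cast; exact mul_nonneg hx.1 h2m.le)
    have hx2 : x * 2^m < 2^m - 1 := by
      have h' := mul_lt_mul_of_pos_right h h2m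
      rw [sub_mul, one_mul, inv_mul_cancel₀ h2m.ne'] at h'
      linarith
    have hj0lt : (j0:ℝ) < 2^m - 1 := by linarith
    have hj0le : j0.toNat + 1 ≤ 2^m := by
      have : (j0:ℝ) + 1 < 2^m := by linarith
      have hz : (j0 + 1 : ℤ) ≤ ((2^m : ℕ) : ℤ) := by
        have h2 : ((j0 + 1 : ℤ) : ℝ) ≤ (((2^m : ℕ) : ℤ) : ℝ) := by push_cast; linarith
        exact_mod_cast h2
      omega
    have hc1 : ((j0.toNat : ℕ):ℝ) = (j0:ℝ) := by
      exact_mod_cast congrArg (Int.cast : ℤ → ℝ) (Int.toNat_of_nonneg hj0nn)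
    have h1 := hfar j0.toNat (by omega)
    have h2 := hfar (j0.toNat + 1) hj0le
    rw [hc1] at h1
    have hc2 : ((j0.toNat + 1 : ℕ):ℝ) = (j0:ℝ) + 1 := by rw [Nat.cast_add, Nat.cast_one, hc1]
    rw [hc2] at h2
    have hd1 : (j0:ℝ)/2^m ≤ x := by rw [div_le_iff₀ h2m]; linarith
    have hd2 : x < ((j0:ℝ)+1)/2^m := by rw [lt_div_iff₀ h2m]; linarith
    rw [abs_of_nonneg (by linarith)] at h1
    rw [abs_of_nonpos (by linarith)] at h2
    intro y hy
    exact ⟨by linarith [hy.1], by linarith [hy.2]⟩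

lemma mc_le_of_subset {β : ℝ} (hβ1 : 1 < β) (hβ2 : β < 2) {u : ℕ → ℝ} {x : ℝ} (m k : ℕ)
    (h : betaI β u x k ⊆ dyadic m x) :
    (m:ℝ) * Real.log 2 / Real.log β ≤ (k:ℝ) := by
  have hb0 : (0:ℝ) < β := lt_trans one_pos hβ1
  have hb1 : (0:ℝ) < β - 1 := by linarith
  have hbi : (1:ℝ) ≤ (β-1)⁻¹ := by rw [le_inv_comm₀ one_pos hb1]; linarith
  have hpk : (0:ℝ) < β ^ k := pow_pos hb0 k
  have h2m : (0:ℝ) < 2 ^ m := by positivity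
  set a := ∑ n ∈ Finset.Icc 1 k, betaBit β u x n / β ^ n with ha
  set L : ℝ := (β ^ k)⁻¹ * (β - 1)⁻¹ with hLdef
  have hL0 : (0:ℝ) ≤ L := by positivity
  have h1 : a ∈ betaI β u x k := ⟨le_rfl, by linarith⟩
  have h2 : a + L ∈ betaI β u x k := ⟨by linarith, le_rfl⟩
  have d1 := h h1
  have d2 := h h2
  have hlen : L ≤ ((2:ℝ)^m)⁻¹ := by
    unfold dyadic at d1 d2
    split_ifs at d1 d2 with hc
    · have e1 := d1.1
      have e2 := d2.2
      linarith
    · have e1 := d1.1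
      have e2 := d2.2
      have : ((⌊x*2^m⌋:ℝ)+1)/2^m = (⌊x*2^m⌋:ℝ)/2^m + ((2:ℝ)^m)⁻¹ := by
        rw [add_div, one_div]
      rw [this] at e2
      linarith [e2.le]
  have hpow : (2:ℝ)^m ≤ β^k := by
    have hk : (β^k)⁻¹ ≤ ((2:ℝ)^m)⁻¹ := by
      calc (β^k)⁻¹ = (β^k)⁻¹ * 1 := (mul_one _).symm
      _ ≤ (β^k)⁻¹ * (β-1)⁻¹ := mul_le_mul_of_nonneg_left hbi (by positivity)
      _ ≤ ((2:ℝ)^m)⁻¹ := hlen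
    exact (inv_le_inv₀ hpk h2m).1 hk
  have hlog := Real.log_le_log h2m hpow
  rw [Real.log_pow, Real.log_pow] at hlog
  have hlogβ : 0 < Real.log β := Real.log_pos hβ1
  rw [div_le_iff₀ hlogβ]
  exact_mod_cast hlog

/-- for any positive sequence `n_m → ∞` and any `ε > 0`, the Lebesgue measure
of `{x ∈ [0,1] : |k(m,u,x) − m·log 2/log β| > ε·n_m}` tends to `0` as `m → ∞`
(the inequality is understood to hold whenever `k(m,u,x) = ∞`), i.e.
`(1/n_m)(k(m,u,x) − m·log 2/log β)` converges to `0` in probability. -/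
theorem stmt_2 (β : ℝ) (hβ : β ∈ Set.Ioo (1:ℝ) 2) (u : ℕ → ℝ)
    (hu : ∀ n, 1 ≤ n → u n ∈ Set.Icc (1:ℝ) (β - 1)⁻¹)
    (n : ℕ → ℝ) (hn : ∀ m, 0 < n m) (hninf : Filter.Tendsto n Filter.atTop Filter.atTop)
    (ε : ℝ) (hε : 0 < ε) :
    Filter.Tendsto
      (fun m : ℕ => volume {x ∈ Set.Icc (0:ℝ) 1 |
        ∀ j : ℕ, kval β u x m = (j : ℕ∞) →
          ε * n m < |(j : ℝ) - (m : ℝ) * Real.log 2 / Real.log β|})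
      Filter.atTop (nhds 0) := by
  obtain ⟨hβ1, hβ2⟩ := hβ
  have hb0 : (0:ℝ) < β := lt_trans one_pos hβ1
  have hb1 : (0:ℝ) < β - 1 := by linarith
  have hlogβ : 0 < Real.log β := Real.log_pos hβ1
  set C : ℝ := 4 * β * (β - 1)⁻¹ with hCdef
  -- the dominating sequence
  have hR : Filter.Tendsto (fun m : ℕ => ENNReal.ofReal (C * β ^ (-(ε * n m))))
      Filter.atTop (nhds 0) := by
    have h1 : Filter.Tendsto (fun m : ℕ => (ε * Real.log β) * n m) Filter.atTop Filter.atTop :=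
      hninf.const_mul_atTop (by positivity)
    have h2 : Filter.Tendsto (fun m : ℕ => -((ε * Real.log β) * n m)) Filter.atTop Filter.atBot :=
      tendsto_neg_atTop_atBot.comp h1
    have h3 : Filter.Tendsto (fun m : ℕ => β ^ (-(ε * n m))) Filter.atTop (nhds 0) := by
      have he : ∀ m : ℕ, β ^ (-(ε * n m)) = Real.exp (-((ε * Real.log β) * n m)) := by
        intro m
        rw [Real.rpow_def_of_pos hb0]
        ring_nf
      simp only [he]
      exact Real.tendsto_exp_atBot.comp h2
    have h4 : Filter.Tendsto (fun m : ℕ => C * β ^ (-(ε * n m))) Filter.atTop (nhds 0) := by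
      have := h3.const_mul C
      simpa using this
    have := (ENNReal.continuous_ofReal.tendsto 0).comp h4
    simpa [Function.comp_def] using this
  -- eventual bound
  have hbound : ∀ᶠ m in Filter.atTop, volume {x ∈ Set.Icc (0:ℝ) 1 |
        ∀ j : ℕ, kval β u x m = (j : ℕ∞) →
          ε * n m < |(j : ℝ) - (m : ℝ) * Real.log 2 / Real.log β|}
      ≤ ENNReal.ofReal (C * β ^ (-(ε * n m))) := by
    have hev : ∀ᶠ m in Filter.atTop, 1 ≤ ε * n m := by
      filter_upwards [hninf.eventually (Filter.eventually_ge_atTop (1/ε))] with m hm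
      rw [div_le_iff₀ hε] at hm
      linarith [hm, mul_comm (n m) ε]
    filter_upwards [hev] with m hm
    set t : ℝ := ε * n m with htdef
    set c : ℝ := Real.log 2 / Real.log β with hcdef
    have hc0 : 0 ≤ c := div_nonneg (Real.log_nonneg one_le_two) hlogβ.le
    have hmc0 : (0:ℝ) ≤ (m:ℝ) * c := by positivity
    set K : ℕ := ⌊(m:ℝ) * c + t⌋₊ with hKdef
    have hK1 : 1 ≤ K := by
      rw [hKdef]
      exact Nat.le_floor (by push_cast; linarith)
    have hKle : (K:ℝ) ≤ (m:ℝ) * c + t := Nat.floor_le (by linarith)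
    have hKgt : (m:ℝ) * c + t < K + 1 := Nat.lt_floor_add_one _
    set L : ℝ := (β ^ K)⁻¹ * (β - 1)⁻¹ with hLdef
    have hL0 : (0:ℝ) < L := by positivity
    have h2m : (0:ℝ) < 2 ^ m := by positivity
    -- bad set is contained in union of small intervals around dyadic points
    have hsub : {x ∈ Set.Icc (0:ℝ) 1 |
        ∀ j : ℕ, kval β u x m = (j : ℕ∞) →
          ε * n m < |(j : ℝ) - (m : ℝ) * Real.log 2 / Real.log β|}
        ⊆ ⋃ j ∈ Finset.range (2^m + 1),
            Set.Icc ((j:ℝ)/2^m - L) ((j:ℝ)/2^m + L) := by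
      intro x hx
      obtain ⟨hx01, hbad⟩ := hx
      by_contra hnot
      simp only [Set.mem_iUnion, not_exists] at hnot
      have hfar : ∀ j : ℕ, j ≤ 2^m → L < |x - (j:ℝ)/2^m| := by
        intro j hj
        have hn2 := hnot j (Finset.mem_range.2 (by omega))
        rw [Set.mem_Icc, not_and_or, not_le, not_le] at hn2
        rcases hn2 with hlt | hgt
        · calc L < (j:ℝ)/2^m - x := by linarith
          _ ≤ |(j:ℝ)/2^m - x| := le_abs_self _
          _ = |x - (j:ℝ)/2^m| := abs_sub_comm _ _
        · calc L < x - (j:ℝ)/2^m := by linarith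
          _ ≤ |x - (j:ℝ)/2^m| := le_abs_self _
      have hdy : betaI β u x K ⊆ dyadic m x := subset_dyadic hβ1 hβ2 hu hx01 m K hfar
      have hmem : (K : ℕ∞) ∈ {e : ℕ∞ | ∃ k : ℕ, e = (k : ℕ∞) ∧ 1 ≤ k ∧ betaI β u x k ⊆ dyadic m x} :=
        ⟨K, rfl, hK1, hdy⟩
      have hle : kval β u x m ≤ (K : ℕ∞) := sInf_le hmem
      have hne : kval β u x m ≠ ⊤ := by
        intro htop
        rw [htop] at hle
        exact absurd (top_le_iff.1 hle) (by simp)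
      obtain ⟨j, hj⟩ := WithTop.ne_top_iff_exists.1 hne
      replace hj : kval β u x m = (j : ℕ∞) := hj.symm
      have hjK : j ≤ K := by
        rw [hj] at hle
        exact_mod_cast hle
      -- lower bound on kval
      have hge : ((m:ℝ) * Real.log 2 / Real.log β) ≤ (j:ℝ) := by
        have hlow : (⌈(m:ℝ) * c⌉₊ : ℕ∞) ≤ kval β u x m := by
          apply le_sInf
          rintro e ⟨k, rfl, hk1, hksub⟩
          have := mc_le_of_subset hβ1 hβ2 m k hksub
          have hkk : ⌈(m:ℝ) * c⌉₊ ≤ k := Nat.ceil_le.2 (by rw [hcdef]; rw [mul_div_assoc] at this; exact this)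
          exact_mod_cast hkk
        rw [hj] at hlow
        have : ⌈(m:ℝ) * c⌉₊ ≤ j := by exact_mod_cast hlow
        calc (m:ℝ) * Real.log 2 / Real.log β = (m:ℝ) * c := by rw [hcdef, mul_div_assoc]
        _ ≤ (⌈(m:ℝ) * c⌉₊ : ℝ) := Nat.le_ceil _
        _ ≤ (j:ℝ) := by exact_mod_cast this
      have habs := hbad j hj
      have : |(j:ℝ) - (m:ℝ) * Real.log 2 / Real.log β| ≤ t := by
        rw [abs_le]
        constructor
        · linarith
        · have hj' : (j:ℝ) ≤ (K:ℝ) := by exact_mod_cast hjK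
          have : (m:ℝ) * Real.log 2 / Real.log β = (m:ℝ) * c := by rw [hcdef, mul_div_assoc]
          linarith
      linarith
    -- measure estimate
    have hKreal : (m:ℝ) * c + t - 1 ≤ (K:ℝ) := by linarith
    have hpowmc : β ^ ((m:ℝ) * c) = (2:ℝ)^m := by
      rw [Real.rpow_def_of_pos hb0]
      have he : Real.log β * ((m:ℝ) * c) = (m:ℝ) * Real.log 2 := by
        rw [hcdef]
        field_simp
      rw [he, ← Real.log_pow, Real.exp_log (by positivity)]
    have hinvK : (β ^ K)⁻¹ ≤ β * (((2:ℝ)^m)⁻¹ * β ^ (-t)) := by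
      have e1 : (β:ℝ) ^ K = β ^ ((K:ℝ)) := (Real.rpow_natCast β K).symm
      rw [e1, ← Real.rpow_neg hb0.le]
      calc β ^ (-(K:ℝ)) ≤ β ^ (-((m:ℝ) * c + t - 1)) :=
            Real.rpow_le_rpow_of_exponent_le hβ1.le (by linarith)
      _ = β * (((2:ℝ)^m)⁻¹ * β ^ (-t)) := by
          rw [show -((m:ℝ) * c + t - 1) = 1 + (-((m:ℝ) * c) + -t) by ring,
            Real.rpow_add hb0, Real.rpow_add hb0, Real.rpow_one,
            Real.rpow_neg hb0.le ((m:ℝ) * c), hpowmc]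
    have hrealineq : ((2^m + 1 : ℕ):ℝ) * (2 * L) ≤ C * β ^ (-t) := by
      have hP : (0:ℝ) ≤ β ^ (-t) := Real.rpow_nonneg hb0.le _
      have hQ1 : (1:ℝ) ≤ (2:ℝ)^m := one_le_pow₀ one_le_two
      have hcast : ((2^m + 1 : ℕ):ℝ) = (2:ℝ)^m + 1 := by push_cast; ring
      have hLle : L ≤ (β - 1)⁻¹ * (β * (((2:ℝ)^m)⁻¹ * β ^ (-t))) := by
        rw [hLdef, mul_comm]
        exact mul_le_mul_of_nonneg_left hinvK (by positivity)
      have hinvle : ((2:ℝ)^m + 1) * ((2:ℝ)^m)⁻¹ ≤ 2 := by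
        rw [add_mul, mul_inv_cancel₀ h2m.ne', one_mul]
        have : ((2:ℝ)^m)⁻¹ ≤ 1 := inv_le_one_of_one_le₀ hQ1
        linarith
      calc ((2^m + 1 : ℕ):ℝ) * (2 * L)
          ≤ ((2:ℝ)^m + 1) * (2 * ((β - 1)⁻¹ * (β * (((2:ℝ)^m)⁻¹ * β ^ (-t))))) := by
            rw [hcast]
            exact mul_le_mul_of_nonneg_left (by linarith) (by positivity)
      _ = (((2:ℝ)^m + 1) * ((2:ℝ)^m)⁻¹) * (2 * β * (β - 1)⁻¹ * β ^ (-t)) := by ring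
      _ ≤ 2 * (2 * β * (β - 1)⁻¹ * β ^ (-t)) :=
            mul_le_mul_of_nonneg_right hinvle (by positivity)
      _ = C * β ^ (-t) := by rw [hCdef]; ring
    refine le_trans (measure_mono hsub) ?_
    refine le_trans (measure_biUnion_finset_le _ _) ?_
    have hsum : ∑ j ∈ Finset.range (2^m + 1),
        volume (Set.Icc ((j:ℝ)/2^m - L) ((j:ℝ)/2^m + L))
        = ENNReal.ofReal (((2^m + 1 : ℕ):ℝ) * (2 * L)) := by
      have h1 : ∀ j ∈ Finset.range (2^m + 1),
          volume (Set.Icc ((j:ℝ)/2^m - L) ((j:ℝ)/2^m + L)) = ENNReal.ofReal (2 * L) := by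
        intro j _
        rw [Real.volume_Icc]
        congr 1
        ring
      rw [Finset.sum_congr rfl h1, Finset.sum_const, Finset.card_range, nsmul_eq_mul,
        ← ENNReal.ofReal_natCast (2^m + 1), ← ENNReal.ofReal_mul (by positivity)]
    rw [hsum]
    exact ENNReal.ofReal_le_ofReal hrealineq
  exact tendsto_of_tendsto_of_tendsto_of_le_of_le' tendsto_const_nhds hR
    (Filter.Eventually.of_forall fun m => zero_le) hbound
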